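/- For all positive integers x and y, the number e^(x/y) is irrational. -/

import Mathlib

open Polynomial Finset

lemma eval_zero_iterate (j : ℕ) (q : Polynomial ℤ) :
    (derivative^[j] q).eval 0 = (j.factorial : ℤ) * q.coeff j := by
  rw [← coeff_zero_eq_eval_zero, coeff_iterate_derivative]
  simp [Nat.descFactorial_self]

lemma factorial_dvd_iterate_derivative_eval_zero (n j : ℕ) (q : Polynomial ℤ)
    (h : X ^ n ∣ q) : (n.factorial : ℤ) ∣ (derivative^[j] q).eval 0 := by
  rw [eval_zero_iterate]
  rcases lt_or_ge j n with hj | hj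
  · obtain ⟨r, rfl⟩ := h
    rw [coeff_X_pow_mul', if_neg (by omega)]
    simp
  · exact Dvd.dvd.mul_right (Int.natCast_dvd_natCast.2 (Nat.factorial_dvd_factorial hj)) _

noncomputable def P (n : ℕ) : Polynomial ℤ := X ^ n * (1 - X) ^ n

noncomputable def F (n m : ℕ) : Polynomial ℤ :=
  ∑ j ∈ range (2 * n + 1), (-1) ^ j * C ((m : ℤ) ^ (2 * n - j)) * derivative^[j] (P n)

lemma key_identity (n m : ℕ) :
    C (m : ℤ) * F n m + derivative (F n m) = C ((m : ℤ) ^ (2 * n + 1)) * P n := by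
  have hdeg : (P n).natDegree < 2 * n + 1 := by
    have : (P n).natDegree ≤ 2 * n := by
      apply le_trans (natDegree_mul_le)
      have h1 : (X ^ n : Polynomial ℤ).natDegree ≤ n := natDegree_X_pow_le n -- check name
      have h2 : ((1 - X : Polynomial ℤ) ^ n).natDegree ≤ n :=
        le_trans (natDegree_pow_le) (by
          have : (1 - X : Polynomial ℤ).natDegree ≤ 1 := by
            apply le_trans (natDegree_sub_le _ _); simp
          nlinarith)
      omega
    omega
  have hg := Finset.sum_range_sub
    (fun j => -((-1) ^ j * C ((m : ℤ) ^ (2 * n + 1 - j)) * derivative^[j] (P n))) (2 * n + 1)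
  rw [F, Finset.mul_sum, derivative_sum, ← Finset.sum_add_distrib]
  have : ∀ j ∈ range (2 * n + 1),
      C (m : ℤ) * ((-1) ^ j * C ((m : ℤ) ^ (2 * n - j)) * derivative^[j] (P n))
        + derivative ((-1) ^ j * C ((m : ℤ) ^ (2 * n - j)) * derivative^[j] (P n))
      = (-((-1) ^ (j+1) * C ((m : ℤ) ^ (2 * n + 1 - (j+1))) * derivative^[j+1] (P n)))
        - (-((-1) ^ j * C ((m : ℤ) ^ (2 * n + 1 - j)) * derivative^[j] (P n))) := by
    intro j hj
    rw [Finset.mem_range] at hj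
    have h1 : (2 : ℕ) * n + 1 - j = (2 * n - j) + 1 := by omega
    have h2 : (2 : ℕ) * n + 1 - (j + 1) = 2 * n - j := by omega
    rw [h1, h2, derivative_mul, derivative_mul, Function.iterate_succ_apply']
    simp only [derivative_pow, derivative_neg, derivative_one, neg_zero, mul_zero, zero_mul,
      derivative_C, add_zero, zero_add, pow_succ, map_mul]
    ring
  rw [Finset.sum_congr rfl this, hg]
  rw [iterate_derivative_eq_zero hdeg]
  simp [pow_succ]

lemma X_pow_dvd_P (n : ℕ) : X ^ n ∣ P n := ⟨(1 - X) ^ n, rfl⟩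

lemma P_comp (n : ℕ) : (P n).comp (1 - X) = P n := by
  simp [P, sub_sub_cancel, mul_comm]

lemma iterate_eval_one (n j : ℕ) :
    (derivative^[j] (P n)).eval 1 = (-1) ^ j * (derivative^[j] (P n)).eval 0 := by
  have h := iterate_derivative_comp_one_sub_X (P n) j
  rw [P_comp] at h
  have := congrArg (fun q => Polynomial.eval (0 : ℤ) q) h
  simp only [eval_mul, eval_pow, eval_neg, eval_one, eval_comp, eval_sub, eval_X, sub_zero] at this
  rw [this, ← mul_assoc, ← mul_pow]
  simp

lemma F_eval_zero_dvd (n m : ℕ) : (n.factorial : ℤ) ∣ (F n m).eval 0 := by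
  rw [F, eval_finset_sum]
  refine Finset.dvd_sum fun j _ => ?_
  rw [eval_mul]
  exact Dvd.dvd.mul_left
    (factorial_dvd_iterate_derivative_eval_zero n j (P n) (X_pow_dvd_P n)) _

lemma F_eval_one_dvd (n m : ℕ) : (n.factorial : ℤ) ∣ (F n m).eval 1 := by
  rw [F, eval_finset_sum]
  refine Finset.dvd_sum fun j _ => ?_
  rw [eval_mul, iterate_eval_one]
  exact Dvd.dvd.mul_left
    (Dvd.dvd.mul_left
      (factorial_dvd_iterate_derivative_eval_zero n j (P n) (X_pow_dvd_P n)) _) _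

lemma P_map_eval (n : ℕ) (t : ℝ) :
    (((P n).map (Int.castRingHom ℝ)).eval t) = t ^ n * (1 - t) ^ n := by
  simp [P]

lemma ftc_identity (n m : ℕ) :
    ∫ t in (0:ℝ)..1, (m : ℝ) ^ (2 * n + 1) * (t ^ n * (1 - t) ^ n) * Real.exp (m * t)
      = (((F n m).eval 1 : ℤ) : ℝ) * Real.exp m - (((F n m).eval 0 : ℤ) : ℝ) := by
  set Fr : Polynomial ℝ := (F n m).map (Int.castRingHom ℝ) with hFr
  have hderiv : ∀ t ∈ Set.uIcc (0:ℝ) 1, HasDerivAt (fun t => Fr.eval t * Real.exp (m * t))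
      ((m : ℝ) ^ (2 * n + 1) * (t ^ n * (1 - t) ^ n) * Real.exp (m * t)) t := by
    intro t _
    have h1 : HasDerivAt (fun t : ℝ => Real.exp (m * t)) ((m : ℝ) * Real.exp (m * t)) t := by
      simpa [mul_comm] using ((hasDerivAt_id t).const_mul (m:ℝ)).exp
    have h2 : HasDerivAt (fun t => Fr.eval t * Real.exp (m * t)) _ t := (Fr.hasDerivAt t).mul h1
    convert h2 using 1
    have hk := congrArg (fun q : Polynomial ℤ =>
        Polynomial.eval t (q.map (Int.castRingHom ℝ))) (key_identity n m)
    simp only [Polynomial.map_add, Polynomial.map_mul, Polynomial.map_C, ← derivative_map,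
      eval_add, eval_mul, eval_C, Int.cast_pow, Int.cast_natCast, Int.cast_mul,
      map_mul, map_pow, map_natCast, Polynomial.map_natCast, Polynomial.map_pow,
      eval_natCast, eval_pow, ← hFr, P_map_eval] at hk
    linear_combination (-Real.exp ((m:ℝ) * t)) * hk
  have hcont : Continuous fun t : ℝ =>
      (m : ℝ) ^ (2 * n + 1) * (t ^ n * (1 - t) ^ n) * Real.exp (m * t) := by
    continuity
  have := intervalIntegral.integral_eq_sub_of_hasDerivAt hderiv
    (hcont.intervalIntegrable 0 1)
  rw [this]
  simp [hFr, eval_map, Polynomial.eval₂_at_one, Polynomial.eval₂_at_zero, coeff_zero_eq_eval_zero]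

lemma integrand_cont (n m : ℕ) :
    Continuous fun t : ℝ => t ^ n * (1 - t) ^ n * Real.exp (m * t) := by continuity

lemma I_pos (n m : ℕ) :
    0 < ∫ t in (0:ℝ)..1, t ^ n * (1 - t) ^ n * Real.exp (m * t) := by
  apply intervalIntegral.intervalIntegral_pos_of_pos_on
    ((integrand_cont n m).intervalIntegrable 0 1)
  · intro t ht
    obtain ⟨h0, h1⟩ := ht
    have h2 : (0:ℝ) < 1 - t := by linarith
    positivity
  · norm_num

lemma I_le (n m : ℕ) :
    (∫ t in (0:ℝ)..1, t ^ n * (1 - t) ^ n * Real.exp (m * t))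
      ≤ (1/4 : ℝ) ^ n * Real.exp m := by
  have h : (∫ t in (0:ℝ)..1, t ^ n * (1 - t) ^ n * Real.exp (m * t))
      ≤ ∫ _ in (0:ℝ)..1, (1/4 : ℝ) ^ n * Real.exp m := by
    apply intervalIntegral.integral_mono_on (by norm_num)
      ((integrand_cont n m).intervalIntegrable 0 1)
      (intervalIntegrable_const)
    intro t ht
    obtain ⟨h0, h1⟩ := ht
    have hp : t ^ n * (1 - t) ^ n ≤ (1/4 : ℝ) ^ n := by
      rw [← mul_pow]
      apply pow_le_pow_left₀ (by nlinarith) (by nlinarith [sq_nonneg (t - 1/2)])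
    have he : Real.exp (m * t) ≤ Real.exp m := by
      apply Real.exp_le_exp.2
      nlinarith [Nat.cast_nonneg (α := ℝ) m]
    have h2 : (0:ℝ) ≤ t ^ n * (1 - t) ^ n := by
      have h3 : (0:ℝ) ≤ 1 - t := by linarith
      positivity
    nlinarith [Real.exp_pos ((m:ℝ) * t)]
  simpa using h

theorem exp_nat_irrational (m : ℕ) (hm : 0 < m) : Irrational (Real.exp m) := by
  intro hmem
  obtain ⟨q, hq⟩ := hmem
  have hexp_pos : (0:ℝ) < Real.exp m := Real.exp_pos _
  have hq_pos : 0 < q := by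
    rw [← Rat.cast_pos (K := ℝ)]; rw [hq]; exact hexp_pos
  set a : ℤ := q.num with ha
  set b : ℤ := (q.den : ℤ) with hb
  have hb_pos : 0 < b := by positivity
  have ha_pos : 0 < a := Rat.num_pos.2 hq_pos
  have hab : (b : ℝ) * Real.exp m = (a : ℝ) := by
    rw [← hq, Rat.cast_def]
    field_simp [hb]
    rw [hb]
    push_cast
    ring
  -- key inequality for every n
  have key : ∀ n : ℕ, (1:ℝ) ≤ ((b : ℝ) * m * Real.exp m) * (((m:ℝ)^2 / 4) ^ n / n.factorial) := by
    intro n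
    set I := ∫ t in (0:ℝ)..1, t ^ n * (1 - t) ^ n * Real.exp (m * t) with hI
    have hIpos := I_pos n m
    have hIle := I_le n m
    have hftc := ftc_identity n m
    have hmul : (b:ℝ) * ((m:ℝ) ^ (2*n+1) * I)
        = ((a * (F n m).eval 1 - b * (F n m).eval 0 : ℤ) : ℝ) := by
      push_cast
      rw [hI, ← intervalIntegral.integral_const_mul]
      rw [show (fun t => (m:ℝ) ^ (2*n+1) * (t ^ n * (1 - t) ^ n * Real.exp (m * t)))
        = (fun t => (m:ℝ) ^ (2*n+1) * (t ^ n * (1 - t) ^ n) * Real.exp (m * t)) by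
          funext t; ring]
      rw [hftc]
      rw [mul_sub, ← mul_assoc, mul_comm (b:ℝ) _, mul_assoc, hab]
      ring
    obtain ⟨k1, hk1⟩ := F_eval_one_dvd n m
    obtain ⟨k0, hk0⟩ := F_eval_zero_dvd n m
    set N : ℤ := a * k1 - b * k0 with hN
    have hNval : a * (F n m).eval 1 - b * (F n m).eval 0 = (n.factorial : ℤ) * N := by
      rw [hk1, hk0, hN]; ring
    have hNpos : 0 < N := by
      have h1 : (0:ℝ) < ((a * (F n m).eval 1 - b * (F n m).eval 0 : ℤ) : ℝ) := by
        rw [← hmul]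
        have hb' : (0:ℝ) < (b:ℝ) := by exact_mod_cast hb_pos
        have hm' : (0:ℝ) < (m:ℝ) := by exact_mod_cast hm
        have := pow_pos hm' (2*n+1)
        positivity
      have h2 : 0 < a * (F n m).eval 1 - b * (F n m).eval 0 := by exact_mod_cast h1
      rw [hNval] at h2
      by_contra hcon
      push_neg at hcon
      have : (n.factorial : ℤ) * N ≤ 0 :=
        mul_nonpos_of_nonneg_of_nonpos (by positivity) hcon
      linarith
    have hNge : (n.factorial : ℝ) ≤ (b:ℝ) * ((m:ℝ) ^ (2*n+1) * I) := by
      rw [hmul, hNval]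
      push_cast
      nlinarith [Nat.cast_pos (α := ℝ) |>.2 (Nat.factorial_pos n),
        (show (1:ℝ) ≤ (N:ℝ) by exact_mod_cast hNpos)]
    have hfact_pos : (0:ℝ) < (n.factorial : ℝ) := by positivity
    have hm' : (0:ℝ) < (m:ℝ) := by exact_mod_cast hm
    have hpow : (m:ℝ) ^ (2*n+1) = (m:ℝ) * ((m:ℝ)^2)^n := by
      rw [← pow_mul]; ring
    have hchain : (n.factorial : ℝ) ≤ (b:ℝ) * m * Real.exp m * ((m:ℝ)^2/4)^n := by
      calc (n.factorial : ℝ) ≤ (b:ℝ) * ((m:ℝ) ^ (2*n+1) * I) := hNge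
        _ ≤ (b:ℝ) * ((m:ℝ) ^ (2*n+1) * ((1/4:ℝ)^n * Real.exp m)) := by
            have hb' : (0:ℝ) < (b:ℝ) := by exact_mod_cast hb_pos
            have := pow_pos hm' (2*n+1)
            nlinarith
        _ = (b:ℝ) * m * Real.exp m * ((m:ℝ)^2/4)^n := by
            rw [hpow, div_pow, div_pow, one_pow]; ring
    rw [mul_div_assoc', le_div_iff₀ hfact_pos]
    linarith
  -- contradiction via tendsto
  have htend : Filter.Tendsto
      (fun n : ℕ => ((b : ℝ) * m * Real.exp m) * (((m:ℝ)^2 / 4) ^ n / n.factorial))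
      Filter.atTop (nhds 0) := by
    have h := FloorSemiring.tendsto_pow_div_factorial_atTop ((m:ℝ)^2 / 4)
    simpa using h.const_mul ((b : ℝ) * m * Real.exp m)
  have hev := htend.eventually_lt_const (show (0:ℝ) < 1 by norm_num)
  obtain ⟨n, hn⟩ := hev.exists
  linarith [key n]

theorem exp_rat_irrational (x y : ℕ) (hx : 0 < x) (hy : 0 < y) :
    Irrational (Real.exp ((x : ℝ) / (y : ℝ))) := by
  intro hmem
  obtain ⟨q, hq⟩ := hmem
  apply exp_nat_irrational x hx
  refine ⟨q ^ y, ?_⟩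
  have hy' : ((y : ℝ)) ≠ 0 := by positivity
  have : Real.exp ((x : ℝ)) = Real.exp ((x : ℝ) / (y : ℝ)) ^ y := by
    rw [← Real.exp_nat_mul]
    congr 1
    field_simp
  rw [this, ← hq]
  push_cast
  ring
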